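/- arXiv:2103.15791 — 2 statements merged into one kernel-verified Lean document; each statement's English description precedes it below -/
import Mathlib

section
/- The series Σ_{ℓ=0}^{∞} 2^{-ℓ}/Q_ℓ converges and equals 1/Q_∞, where Q_∞ = ∏_{k=1}^{∞} (1 - 2^{-k}) (an infinite product converging to a positive real number). -/
/-- `Q m = ∏_{k=1}^{m} (1 - 2^{-k})` as a real number, with `Q 0 = 1`. -/
noncomputable def Q (m : ℕ) : ℝ :=
  ∏ k ∈ Finset.range m, (1 - 1 / 2 ^ (k + 1))

lemma half_le (n : ℕ) : (1:ℝ) / 2 ^ (n + 1) ≤ 1 / 2 := by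
  apply div_le_div_of_nonneg_left (by norm_num) (by norm_num)
  calc (2:ℝ) = 2 ^ 1 := by norm_num
  _ ≤ 2 ^ (n+1) := by apply pow_le_pow_right₀ (by norm_num) (by omega)

lemma factor_pos (k : ℕ) : (0 : ℝ) < 1 - 1 / 2 ^ (k + 1) := by
  have := half_le k; linarith

lemma Q_pos (n : ℕ) : 0 < Q n :=
  Finset.prod_pos fun k _ => factor_pos k

lemma log_summable : Summable (fun n : ℕ => Real.log (1 - 1 / 2 ^ (n + 1))) := by
  rw [← summable_neg_iff]
  apply Summable.of_nonneg_of_le (f := fun n : ℕ => (1/2 : ℝ) ^ n)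
  · intro n
    simp only [neg_nonneg]
    have hx : (0:ℝ) < 1 / 2 ^ (n+1) := by positivity
    exact Real.log_nonpos (le_of_lt (factor_pos n)) (by linarith)
  · intro n
    have hx : (1:ℝ) / 2 ^ (n + 1) ≤ 1 / 2 := half_le n
    have hxpos : (0:ℝ) < 1 / 2 ^ (n+1) := by positivity
    set x : ℝ := 1 / 2 ^ (n+1) with hxdef
    have hpos : (0:ℝ) < 1 - x := by linarith
    have h1 : -Real.log (1 - x) = Real.log (1 - x)⁻¹ := (Real.log_inv _).symm
    rw [h1]
    have h2 : Real.log (1 - x)⁻¹ ≤ (1 - x)⁻¹ - 1 :=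
      Real.log_le_sub_one_of_pos (by positivity)
    have h4 : ((1:ℝ)/2) ^ n = 2 * x := by
      rw [hxdef, div_pow, one_pow, pow_succ]
      field_simp
    have h3 : (1 - x)⁻¹ - 1 ≤ 2 * x := by
      rw [inv_eq_one_div, div_sub' (ne_of_gt hpos), div_le_iff₀ hpos]
      nlinarith
    linarith [h4 ▸ h3]
  · exact summable_geometric_of_lt_one (by norm_num) (by norm_num)

lemma Q_tendsto : Filter.Tendsto Q Filter.atTop
    (nhds (∏' k : ℕ, ((1 : ℝ) - 1 / 2 ^ (k + 1)))) := by
  have h := Real.hasProd_of_hasSum_log (f := fun n : ℕ => (1 : ℝ) - 1 / 2 ^ (n + 1))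
    (fun n => factor_pos n) log_summable.hasSum
  exact h.multipliable.hasProd.tendsto_prod_nat

lemma tprod_pos : 0 < ∏' k : ℕ, ((1 : ℝ) - 1 / 2 ^ (k + 1)) := by
  have := Real.rexp_tsum_eq_tprod (f := fun n : ℕ => (1 : ℝ) - 1 / 2 ^ (n + 1))
    (fun n => factor_pos n) log_summable
  have h2 := this
  rw [← h2]
  exact Real.exp_pos _

lemma partial_sum (n : ℕ) :
    ∑ l ∈ Finset.range (n + 1), (1 / 2 ^ l : ℝ) / Q l = 1 / Q n := by
  induction n with
  | zero => simp [Q]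
  | succ n ih =>
    rw [Finset.sum_range_succ, ih]
    have hQ : Q (n + 1) = Q n * (1 - 1 / 2 ^ (n + 1)) := by
      rw [Q, Q, Finset.prod_range_succ]
    have h1 := Q_pos n
    have h2 := Q_pos (n+1)
    have h3 := factor_pos n
    rw [hQ]
    have h4 : (0:ℝ) < 2 ^ (n+1) := by positivity
    have h5 : (1:ℝ) - 1/2^(n+1) ≠ 0 := ne_of_gt h3
    have h6 : Q n ≠ 0 := ne_of_gt h1
    have hp : (1:ℝ) ≤ 2 ^ n := one_le_pow₀ (by norm_num : (1:ℝ) ≤ 2)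
    have h7 : -Q n + Q n * 2 ^ n * 2 ≠ 0 := by nlinarith
    field_simp [h7]
    have h8 : (2:ℝ) ^ (n + 1) - 1 ≠ 0 := by rw [pow_succ]; nlinarith
    rw [eq_div_iff h8, add_mul, one_div_mul_cancel h8]; ring

/-- The series `Σ_{ℓ≥0} 2^{-ℓ}/Q_ℓ` converges and equals `1/Q_∞`,
where `Q_∞ = ∏_{k=1}^{∞} (1 - 2^{-k})` (a convergent infinite product). -/
theorem euler_series_Qinf :
    Multipliable (fun k : ℕ => (1 : ℝ) - 1 / 2 ^ (k + 1)) ∧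
    HasSum (fun l : ℕ => (1 / 2 ^ l) / Q l)
      (1 / ∏' k : ℕ, ((1 : ℝ) - 1 / 2 ^ (k + 1))) := by
  constructor
  · exact Real.multipliable_of_summable_log (fun n => factor_pos n) log_summable
  · rw [hasSum_iff_tendsto_nat_of_nonneg
      (fun l => div_nonneg (by positivity) (Q_pos l).le)]
    have h1 : Filter.Tendsto (fun n => 1 / Q n) Filter.atTop
        (nhds (1 / ∏' k : ℕ, ((1 : ℝ) - 1 / 2 ^ (k + 1)))) :=
      Filter.Tendsto.div tendsto_const_nhds Q_tendsto (ne_of_gt tprod_pos)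
    have h2 : Filter.Tendsto (fun n => ∑ l ∈ Finset.range (n + 1),
        (1 / 2 ^ l : ℝ) / Q l) Filter.atTop
        (nhds (1 / ∏' k : ℕ, ((1 : ℝ) - 1 / 2 ^ (k + 1)))) := by
      simpa only [partial_sum] using h1
    rwa [← Filter.tendsto_add_atTop_iff_nat 1]
end

section
/- Let p : ℕ × ℕ → ℝ be defined by p(0,1) = 1, p(0,ℓ) = 0 for ℓ ≠ 1, p(n,0) = 0 for all n, and p(n+1,ℓ) = (1 - 2^{-ℓ}) p(n,ℓ) + 2^{-(ℓ-1)} p(n,ℓ-1) for ℓ ≥ 1. Then for every integer n ≥ 0, the mean counter value C_n := Σ_{ℓ=1}^{n+1} ℓ · p(n,ℓ) satisfies C_n = 1 - Σ_{k=1}^{n} (-1)^k C(n,k) 2^{-k} Q_{k-1}. -/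
lemma sum_Icc_one (f : ℕ → ℝ) (m : ℕ) :
    ∑ l ∈ Finset.Icc 1 m, f l = ∑ i ∈ Finset.range m, f (i + 1) := by
  induction m with
  | zero => simp
  | succ m ih => rw [Finset.sum_Icc_succ_top (by omega), ih, Finset.sum_range_succ]

lemma prod_neg' (f : ℕ → ℝ) (k : ℕ) :
    ∏ i ∈ Finset.range k, (-(f i)) = (-1) ^ k * ∏ i ∈ Finset.range k, f i := by
  induction k with
  | zero => simp
  | succ k ih => rw [Finset.prod_range_succ, Finset.prod_range_succ, ih, pow_succ]; ring

/-- For the approximate-counting Markov chain with `p 0 1 = 1`,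
`p 0 ℓ = 0` for `ℓ ≠ 1`, `p n 0 = 0` and
`p (n+1) ℓ = (1 - 2^{-ℓ}) p n ℓ + 2^{-(ℓ-1)} p n (ℓ-1)` for `ℓ ≥ 1`, the mean
counter value `C_n = Σ_{ℓ=1}^{n+1} ℓ p(n,ℓ)` satisfies, for every `n ≥ 0`,
`C_n = 1 - Σ_{k=1}^{n} (-1)^k C(n,k) 2^{-k} Q_{k-1}`. -/
theorem approximate_counting_mean
    (p : ℕ → ℕ → ℝ)
    (h01 : p 0 1 = 1) (h0 : ∀ l : ℕ, l ≠ 1 → p 0 l = 0)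
    (hz : ∀ n : ℕ, p n 0 = 0)
    (hrec : ∀ n m : ℕ,
      p (n + 1) (m + 1) = (1 - 1 / 2 ^ (m + 1)) * p n (m + 1) + (1 / 2 ^ m) * p n m) :
    ∀ n : ℕ,
      (∑ l ∈ Finset.Icc 1 (n + 1), (l : ℝ) * p n l) =
        1 - ∑ k ∈ Finset.Icc 1 n,
          (-1 : ℝ) ^ k * (n.choose k : ℝ) * (1 / 2 ^ k) * Q (k - 1) := by
  have hvan : ∀ n l : ℕ, n + 2 ≤ l → p n l = 0 := by
    intro n
    induction n with
    | zero => intro l hl; exact h0 l (by omega)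
    | succ n ih =>
      intro l hl
      obtain ⟨m, rfl⟩ : ∃ m, l = m + 1 := ⟨l - 1, by omega⟩
      rw [hrec, ih (m + 1) (by omega), ih m (by omega)]; ring
  set G : ℕ → ℝ → ℝ := fun n x => ∑ l ∈ Finset.range (n + 2), x ^ l * p n l with hGdef
  have key : ∀ (n : ℕ) (y : ℝ),
      ∑ m ∈ Finset.range (n + 2), y ^ (m + 1) * p n (m + 1) = G n y := by
    intro n y
    rw [Finset.sum_range_succ, hvan n (n + 2) le_rfl, mul_zero, add_zero]
    simp only [hGdef]
    rw [Finset.sum_range_succ' (fun l => y ^ l * p n l) (n + 1)]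
    simp [hz]
  have hG0 : ∀ x : ℝ, G 0 x = x := by
    intro x
    simp [hGdef, Finset.sum_range_succ, h01, h0 0 (by norm_num), h0 2 (by norm_num), hz]
  have hGrec : ∀ (n : ℕ) (x : ℝ), G (n + 1) x = G n x + (x - 1) * G n (x / 2) := by
    intro n x
    have e1 : G (n + 1) x = ∑ m ∈ Finset.range (n + 2), x ^ (m + 1) * p (n + 1) (m + 1) := by
      simp only [hGdef]
      rw [Finset.sum_range_succ' (fun l => x ^ l * p (n + 1) l) (n + 2)]
      simp [hz]
    rw [e1]
    have e2 : ∀ m ∈ Finset.range (n + 2), x ^ (m + 1) * p (n + 1) (m + 1) =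
        (x ^ (m + 1) * p n (m + 1) - (x / 2) ^ (m + 1) * p n (m + 1))
          + x * ((x / 2) ^ m * p n m) := by
      intro m _
      rw [hrec]
      have h2 : (2 : ℝ) ^ (m + 1) ≠ 0 := by positivity
      have h2' : (2 : ℝ) ^ m ≠ 0 := by positivity
      simp only [div_pow]
      field_simp
      ring
    rw [Finset.sum_congr rfl e2, Finset.sum_add_distrib, Finset.sum_sub_distrib,
      ← Finset.mul_sum, key, key]
    have h3 : ∑ m ∈ Finset.range (n + 2), (x / 2) ^ m * p n m = G n (x / 2) := rfl
    rw [h3]; ring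
  have hGclosed : ∀ (n : ℕ) (x : ℝ), G n x =
      ∑ k ∈ Finset.range (n + 1), (n.choose k : ℝ) *
        ((x / 2 ^ k) * ∏ i ∈ Finset.range k, (x / 2 ^ i - 1)) := by
    intro n
    induction n with
    | zero => intro x; simp [hG0]
    | succ n ih =>
      intro x
      have hT : ∀ k : ℕ, (x - 1) * ((x / 2) / 2 ^ k * ∏ i ∈ Finset.range k, ((x / 2) / 2 ^ i - 1))
          = x / 2 ^ (k + 1) * ∏ i ∈ Finset.range (k + 1), (x / 2 ^ i - 1) := by
        intro k
        rw [Finset.prod_range_succ']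
        have hdd : ∀ i : ℕ, (x / 2) / 2 ^ i - 1 = x / 2 ^ (i + 1) - 1 := by
          intro i; rw [div_div, ← pow_succ']
        simp only [hdd]
        rw [pow_succ']
        field_simp
      have e3 : ∀ k ∈ Finset.range (n + 1), (x - 1) * ((n.choose k : ℝ) *
            ((x / 2) / 2 ^ k * ∏ i ∈ Finset.range k, ((x / 2) / 2 ^ i - 1)))
          = (n.choose k : ℝ) *
            (x / 2 ^ (k + 1) * ∏ i ∈ Finset.range (k + 1), (x / 2 ^ i - 1)) := by
        intro k _
        rw [mul_left_comm, hT]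
      rw [hGrec, ih, ih]
      rw [Finset.mul_sum, Finset.sum_congr rfl e3]
      rw [Finset.sum_range_succ' (fun k => ((n + 1).choose k : ℝ) *
        (x / 2 ^ k * ∏ i ∈ Finset.range k, (x / 2 ^ i - 1))) (n + 1)]
      simp only [Nat.choose_succ_succ, Nat.cast_add, add_mul]
      rw [Finset.sum_add_distrib]
      have hext : ∑ k ∈ Finset.range (n + 1), ((n.choose k : ℝ)) *
            (x / 2 ^ k * ∏ i ∈ Finset.range k, (x / 2 ^ i - 1))
          = (∑ k ∈ Finset.range n, ((n.choose (k + 1) : ℝ)) *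
            (x / 2 ^ (k + 1) * ∏ i ∈ Finset.range (k + 1), (x / 2 ^ i - 1)))
            + ((n + 1 : ℕ).choose 0 : ℝ)
              * (x / 2 ^ 0 * ∏ i ∈ Finset.range 0, (x / 2 ^ i - 1)) := by
        rw [Finset.sum_range_succ' (fun k => ((n.choose k : ℝ)) *
          (x / 2 ^ k * ∏ i ∈ Finset.range k, (x / 2 ^ i - 1))) n]
        simp
      have hext2 : ∑ k ∈ Finset.range (n + 1), ((n.choose (k + 1) : ℝ)) *
            (x / 2 ^ (k + 1) * ∏ i ∈ Finset.range (k + 1), (x / 2 ^ i - 1))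
          = ∑ k ∈ Finset.range n, ((n.choose (k + 1) : ℝ)) *
            (x / 2 ^ (k + 1) * ∏ i ∈ Finset.range (k + 1), (x / 2 ^ i - 1)) := by
        rw [Finset.sum_range_succ, Nat.choose_succ_self]
        simp
      rw [hext2, hext]
      ring
  have hGhalf : ∀ n : ℕ, G n (1 / 2 : ℝ) =
      ∑ k ∈ Finset.range (n + 1), (-1 : ℝ) ^ k * (n.choose k : ℝ) * (1 / 2 ^ (k + 1)) * Q k := by
    intro n
    rw [hGclosed]
    refine Finset.sum_congr rfl fun k _ => ?_
    have h1 : ∀ i : ℕ, (1 / 2 : ℝ) / 2 ^ i - 1 = -(1 - 1 / 2 ^ (i + 1)) := by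
      intro i
      rw [div_div, ← pow_succ']
      ring
    simp only [h1]
    rw [prod_neg' (fun i => 1 - 1 / 2 ^ (i + 1)) k, Q, div_div, ← pow_succ']
    ring
  have hC : ∀ n : ℕ, (∑ l ∈ Finset.Icc 1 (n + 2), (l : ℝ) * p (n + 1) l)
      = (∑ l ∈ Finset.Icc 1 (n + 1), (l : ℝ) * p n l) + G n (1 / 2 : ℝ) := by
    intro n
    rw [sum_Icc_one, sum_Icc_one]
    have e2 : ∀ m ∈ Finset.range (n + 2), ((m + 1 : ℕ) : ℝ) * p (n + 1) (m + 1) =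
        (((m + 1 : ℕ) : ℝ) * p n (m + 1) - ((m + 1 : ℕ) : ℝ) * (1 / 2) ^ (m + 1) * p n (m + 1))
          + ((m : ℕ) : ℝ) * (1 / 2) ^ m * p n m + (1 / 2 : ℝ) ^ m * p n m := by
      intro m _
      rw [hrec]
      have h2 : (2 : ℝ) ^ (m + 1) ≠ 0 := by positivity
      have h2' : (2 : ℝ) ^ m ≠ 0 := by positivity
      push_cast
      rw [div_pow, div_pow, one_pow, one_pow]
      field_simp
      ring
    rw [Finset.sum_congr rfl e2]
    rw [Finset.sum_add_distrib, Finset.sum_add_distrib, Finset.sum_sub_distrib]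
    have hA : ∑ m ∈ Finset.range (n + 2), ((m + 1 : ℕ) : ℝ) * p n (m + 1)
        = ∑ i ∈ Finset.range (n + 1), ((i + 1 : ℕ) : ℝ) * p n (i + 1) := by
      rw [Finset.sum_range_succ, hvan n (n + 2) le_rfl, mul_zero, add_zero]
    have hB1 : ∑ m ∈ Finset.range (n + 2), ((m : ℕ) : ℝ) * (1 / 2) ^ m * p n m
        = ∑ i ∈ Finset.range (n + 1), ((i + 1 : ℕ) : ℝ) * (1 / 2) ^ (i + 1) * p n (i + 1) := by
      rw [Finset.sum_range_succ' (fun m => ((m : ℕ) : ℝ) * (1 / 2 : ℝ) ^ m * p n m) (n + 1)]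
      simp [hz]
    have hB2 : ∑ m ∈ Finset.range (n + 2), ((m + 1 : ℕ) : ℝ) * (1 / 2) ^ (m + 1) * p n (m + 1)
        = ∑ i ∈ Finset.range (n + 1), ((i + 1 : ℕ) : ℝ) * (1 / 2) ^ (i + 1) * p n (i + 1) := by
      rw [Finset.sum_range_succ
        (fun m => ((m + 1 : ℕ) : ℝ) * (1 / 2 : ℝ) ^ (m + 1) * p n (m + 1)) (n + 1),
        hvan n (n + 2) le_rfl]
      simp
    have hD : ∑ m ∈ Finset.range (n + 2), (1 / 2 : ℝ) ^ m * p n m = G n (1 / 2 : ℝ) := rfl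
    rw [hA, hB1, hB2, hD]
    ring
  intro n
  induction n with
  | zero => simp [h01]
  | succ n ih =>
    rw [hC, ih, hGhalf]
    rw [sum_Icc_one (fun k => (-1 : ℝ) ^ k * (n.choose k : ℝ) * (1 / 2 ^ k) * Q (k - 1)) n,
      sum_Icc_one (fun k => (-1 : ℝ) ^ k * ((n + 1).choose k : ℝ) * (1 / 2 ^ k) * Q (k - 1))
        (n + 1)]
    simp only [Nat.add_sub_cancel]
    have hext : ∑ i ∈ Finset.range n, (-1 : ℝ) ^ (i + 1) * (n.choose (i + 1) : ℝ) *
          (1 / 2 ^ (i + 1)) * Q i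
        = ∑ i ∈ Finset.range (n + 1), (-1 : ℝ) ^ (i + 1) * (n.choose (i + 1) : ℝ) *
          (1 / 2 ^ (i + 1)) * Q i := by
      rw [Finset.sum_range_succ, Nat.choose_succ_self]
      simp
    have hsum : ∑ i ∈ Finset.range (n + 1), (-1 : ℝ) ^ (i + 1) * ((n + 1).choose (i + 1) : ℝ) *
          (1 / 2 ^ (i + 1)) * Q i
        = (∑ i ∈ Finset.range (n + 1), (-1 : ℝ) ^ (i + 1) * (n.choose (i + 1) : ℝ) *
          (1 / 2 ^ (i + 1)) * Q i)
          - ∑ i ∈ Finset.range (n + 1), (-1 : ℝ) ^ i * (n.choose i : ℝ) *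
            (1 / 2 ^ (i + 1)) * Q i := by
      rw [← Finset.sum_sub_distrib]
      refine Finset.sum_congr rfl fun i _ => ?_
      simp only [Nat.choose_succ_succ, Nat.cast_add]
      ring
    rw [hext, hsum]
    ring
end
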